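/- Let λ ∈ ℤ^n_{++} with #λ = r and let θ ∈ {0,1}^r. Then the destination vertices of the right moves R_i(λ), taken over all i with θ_i = 1 and computed independently in D_λ, are pairwise distinct empty vertices of D_λ; consequently deleting from D_λ the ×'s with θ_i = 1 and placing a × at each destination vertex yields the weight diagram of an integral dominant weight R_θ(λ) ∈ ℤ^n_{++}, and z(R_θ(λ)) = z(λ) − 2·#{i : θ_i = 1 and x_i = 0}. -/

import Mathlib

open scoped Classical

noncomputable section

/-- An integral dominant weight in `ℤⁿ₊₊`: weakly decreasing entries, and any
repeated entry must be zero. -/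
structure DomWeight (n : ℕ) where
  coeff : Fin n → ℤ
  antitone' : ∀ i j : Fin n, i ≤ j → coeff j ≤ coeff i
  regular' : ∀ i j : Fin n, i ≠ j → coeff i = coeff j → coeff i = 0

namespace DomWeight

variable {n : ℕ}

/-- The multiset of entries of a weight. -/
def entries (l : DomWeight n) : Multiset ℤ :=
  Multiset.map l.coeff Finset.univ.val

/-- `k` occurs as an entry of `l`. -/
def IsEntry (l : DomWeight n) (k : ℤ) : Prop := ∃ i, l.coeff i = k

/-- `z(λ)`: the number of zero entries. -/
def zNum (l : DomWeight n) : ℕ := (Finset.univ.filter fun i => l.coeff i = 0).card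

/-- `z̄(λ)`: the parity of `z(λ)`. -/
def barz (l : DomWeight n) : ℕ := l.zNum % 2

/-- The number `⌊z(λ)/2⌋` of `×`'s at vertex `0` of the weight diagram. -/
def numX0 (l : DomWeight n) : ℕ := l.zNum / 2

/-- Vertex `v ≥ 1` of the weight diagram carries the symbol `×`. -/
def HasX (l : DomWeight n) (v : ℕ) : Prop :=
  0 < v ∧ l.IsEntry (v : ℤ) ∧ l.IsEntry (-(v : ℤ))

/-- Vertex `v ≥ 1` of the weight diagram carries the symbol `>`. -/
def HasGt (l : DomWeight n) (v : ℕ) : Prop :=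
  0 < v ∧ l.IsEntry (v : ℤ) ∧ ¬ l.IsEntry (-(v : ℤ))

/-- Vertex `v ≥ 1` of the weight diagram carries the symbol `<`. -/
def HasLt (l : DomWeight n) (v : ℕ) : Prop :=
  0 < v ∧ ¬ l.IsEntry (v : ℤ) ∧ l.IsEntry (-(v : ℤ))

/-- Vertex `v ≥ 1` of the weight diagram is empty. -/
def EmptyAt (l : DomWeight n) (v : ℕ) : Prop :=
  0 < v ∧ ¬ l.IsEntry (v : ℤ) ∧ ¬ l.IsEntry (-(v : ℤ))

/-- The finite set of positive vertices carrying a `×`. -/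
def posXs (l : DomWeight n) : Finset ℕ :=
  (Finset.univ.image fun i => (l.coeff i).toNat).filter fun v => l.HasX v

/-- `#λ`, the degree of atypicality: the total number of `×`'s in the diagram. -/
def atyp (l : DomWeight n) : ℕ := l.numX0 + l.posXs.card

/-- The vertex `x_i` at which the `i`-th `×` (numbered `1,…,r` from bottom to top
at vertex `0`, then from left to right) sits. -/
def xVertex (l : DomWeight n) (i : ℕ) : ℕ :=
  if i ≤ l.numX0 then 0 else (l.posXs.sort (· ≤ ·)).getD (i - l.numX0 - 1) 0

/-- The distance `d_λ(s,t)`: the number of empty vertices minus the number of `×`'s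
strictly between `s` and `t`. -/
def dist (l : DomWeight n) (s t : ℕ) : ℤ :=
  (((Finset.Ioo s t).filter fun v => l.EmptyAt v).card : ℤ)
    - (((Finset.Ioo s t).filter fun v => l.HasX v).card : ℤ)

/-- The length `ℓ_λ(i,t)` from the `i`-th `×` to the vertex `t`. -/
def len (l : DomWeight n) (i t : ℕ) : ℤ :=
  if 0 < l.xVertex i then l.dist (l.xVertex i) t
  else l.dist 0 t - 2 * ((l.numX0 : ℤ) - (i : ℤ)) - (l.barz : ℤ)

/-- `t` is the destination of the right move `R_i(λ)`: the first empty vertex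
`t > x_i` with `ℓ_λ(i,t) = 0` and `ℓ_λ(i,s) < 0` for all empty `s` in between. -/
def IsRightMoveDest (l : DomWeight n) (i t : ℕ) : Prop :=
  l.EmptyAt t ∧ l.xVertex i < t ∧ l.len i t = 0 ∧
    ∀ s, l.xVertex i < s → s < t → l.EmptyAt s → l.len i s < 0

end DomWeight

/-- The set of indices `i ∈ {1,…,r}` selected by `θ ∈ {0,1}^r`. -/
def selected (r : ℕ) (θ : ℕ → Bool) : Finset ℕ :=
  (Finset.Icc 1 r).filter fun i => θ i = true

namespace DomWeight

variable {n : ℕ}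

/-- `l = R_θ(m)`: the weight diagram of `l` is obtained from that of `m` by
performing, independently in `D_m`, the right moves `R_i(m)` for all selected `i`. -/
def IsRightPathRes (m : DomWeight n) (θ : ℕ → Bool) (l : DomWeight n) : Prop :=
  ∃ dest : ℕ → ℕ,
    (∀ i ∈ selected m.atyp θ, m.IsRightMoveDest i (dest i)) ∧
    l.entries + ∑ i ∈ selected m.atyp θ,
        ({(m.xVertex i : ℤ), -(m.xVertex i : ℤ)} : Multiset ℤ)
      = m.entries + ∑ i ∈ selected m.atyp θ,
        ({(dest i : ℤ), -(dest i : ℤ)} : Multiset ℤ)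

/-- The matrix coefficient `a_{λμ} = [E(μ) : L(λ)]`. -/
def aCoeff (l m : DomWeight n) : ℚ :=
  if ∃ θ : ℕ → Bool, m.IsRightPathRes θ l then
    (2 : ℚ) ^ (((m.zNum : ℤ) - (l.zNum : ℤ)) / 2) else 0

/-- A single raising move of the `i`-th `×`, as a relation on dominant weights. -/
def RMoveRel (i : ℕ) (m l : DomWeight n) : Prop :=
  ∃ t, m.IsRightMoveDest i t ∧
    l.entries + ({(m.xVertex i : ℤ), -(m.xVertex i : ℤ)} : Multiset ℤ)
      = m.entries + ({(t : ℤ), -(t : ℤ)} : Multiset ℤ)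

/-- `k`-fold iterate of the raising move of the `i`-th `×`. -/
def RMoveIter (i : ℕ) : ℕ → DomWeight n → DomWeight n → Prop
  | 0, m, l => m = l
  | k + 1, m, l => ∃ ν, RMoveRel i m ν ∧ RMoveIter i k ν l

/-- Composition of iterated raising moves along a list of indices. -/
def RChainAux (θ : ℕ → ℕ) : List ℕ → DomWeight n → DomWeight n → Prop
  | [], m, l => m = l
  | i :: rest, m, l => ∃ ν, RMoveIter i (θ i) m ν ∧ RChainAux θ rest ν l

/-- `l = R'_θ(m) = R_1^{θ_1} R_2^{θ_2} ⋯ R_r^{θ_r}(m)` where `r = #m`. -/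
def IsRPrimeRes (m : DomWeight n) (θ : ℕ → ℕ) (l : DomWeight n) : Prop :=
  RChainAux θ ((List.range' 1 m.atyp).reverse) m l

/-- The set of `θ ∈ ℕ^r` (supported on `{1,…,r}`, `r = #m`) with `R'_θ(m) = l`. -/
def bTheta (m l : DomWeight n) : Set (ℕ → ℕ) :=
  {θ | (∀ i, i ∉ Finset.Icc 1 m.atyp → θ i = 0) ∧ m.IsRPrimeRes θ l}

/-- The matrix coefficient `b_{λμ}`. -/
def bCoeff (l m : DomWeight n) : ℚ :=
  (2 : ℚ) ^ (((m.zNum : ℤ) - (l.zNum : ℤ)) / 2) *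
    ∑ᶠ θ ∈ bTheta m l, (-1 : ℚ) ^ (∑ i ∈ Finset.Icc 1 m.atyp, θ i)

/-- The total order on `ℤⁿ₊₊`: `λ < μ` iff at the first index where they differ,
the entry of `μ` is smaller. -/
def wlt (l m : DomWeight n) : Prop :=
  ∃ p : Fin n, (∀ q : Fin n, q < p → l.coeff q = m.coeff q) ∧ m.coeff p < l.coeff p

end DomWeight



namespace DomWeight
variable {n : ℕ}

-- ### batch 1: basic lemmas

lemma count_entries (l : DomWeight n) (v : ℤ) :
    l.entries.count v = (Finset.univ.filter fun i => l.coeff i = v).card := by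
  rw [entries, Multiset.count_map]
  rw [Finset.card_filter]
  simp [Finset.sum_ite_eq, eq_comm]
  rfl

lemma count_zero_entries (l : DomWeight n) : l.entries.count 0 = l.zNum := by
  rw [count_entries]; rfl

lemma isEntry_iff_count (l : DomWeight n) (v : ℤ) : l.IsEntry v ↔ 0 < l.entries.count v := by
  rw [count_entries, Finset.card_pos]
  constructor
  · rintro ⟨i, hi⟩; exact ⟨i, by simp [hi]⟩
  · rintro ⟨i, hi⟩; simp at hi; exact ⟨i, hi⟩

lemma count_le_one (l : DomWeight n) {v : ℤ} (hv : v ≠ 0) : l.entries.count v ≤ 1 := by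
  rw [count_entries]
  by_contra h
  push_neg at h
  obtain ⟨i, hi, j, hj, hij⟩ := Finset.one_lt_card.mp h
  simp only [Finset.mem_filter] at hi hj
  exact hv (hi.2 ▸ l.regular' i j hij (hi.2.trans hj.2.symm))

lemma card_entries (l : DomWeight n) : Multiset.card l.entries = n := by
  simp [entries]

-- ### batch 2: xVertex lemmas

lemma hasX_of_mem_posXs (l : DomWeight n) {v : ℕ} (h : v ∈ l.posXs) : l.HasX v :=
  (Finset.mem_filter.mp h).2

lemma xVertex_eq_zero (l : DomWeight n) {i : ℕ} (h : i ≤ l.numX0) : l.xVertex i = 0 := by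
  simp [xVertex, h]

lemma xVertex_mem_posXs (l : DomWeight n) {i : ℕ} (h1 : l.numX0 < i) (h2 : i ≤ l.atyp) :
    l.xVertex i ∈ l.posXs := by
  have hlen : i - l.numX0 - 1 < (l.posXs.sort (· ≤ ·)).length := by
    rw [Finset.length_sort]
    have := l.atyp
    unfold atyp at h2
    omega
  rw [xVertex, if_neg (by omega)]
  rw [List.getD_eq_getElem _ 0 hlen]
  exact (Finset.mem_sort _).mp (List.getElem_mem _)

lemma xVertex_pos (l : DomWeight n) {i : ℕ} (h1 : l.numX0 < i) (h2 : i ≤ l.atyp) :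
    0 < l.xVertex i :=
  (l.hasX_of_mem_posXs (l.xVertex_mem_posXs h1 h2)).1

lemma xVertex_lt (l : DomWeight n) {i j : ℕ} (h1 : l.numX0 < i) (hij : i < j)
    (h2 : j ≤ l.atyp) : l.xVertex i < l.xVertex j := by
  have hlj : j - l.numX0 - 1 < (l.posXs.sort (· ≤ ·)).length := by
    rw [Finset.length_sort]; unfold atyp at h2; omega
  have hli : i - l.numX0 - 1 < (l.posXs.sort (· ≤ ·)).length := by omega
  rw [xVertex, if_neg (by omega), xVertex, if_neg (by omega)]
  rw [List.getD_eq_getElem _ 0 hli, List.getD_eq_getElem _ 0 hlj]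
  have := (Finset.sortedLT_sort l.posXs).strictMono_get
    (a := ⟨i - l.numX0 - 1, hli⟩) (b := ⟨j - l.numX0 - 1, hlj⟩) (by simp; omega)
  simpa using this

lemma xVertex_eq_zero_iff (l : DomWeight n) {i : ℕ} (h2 : i ≤ l.atyp) :
    l.xVertex i = 0 ↔ i ≤ l.numX0 := by
  constructor
  · intro h
    by_contra hc
    push_neg at hc
    exact absurd h (by have := l.xVertex_pos hc h2; omega)
  · exact l.xVertex_eq_zero

-- ### batch 3: dist lemmas and key lemma

lemma filter_Ioo_split (p : ℕ → Prop) {a b c : ℕ} (h1 : a < b) (h2 : b < c) :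
    ((Finset.Ioo a c).filter p).card
      = ((Finset.Ioo a b).filter p).card + ((Finset.Ioo b c).filter p).card
        + (if p b then 1 else 0) := by
  have hu : Finset.Ioo a b ∪ Finset.Ico b c = Finset.Ioo a c := by
    ext x
    simp only [Finset.mem_union, Finset.mem_Ioo, Finset.mem_Ico]
    omega
  have hico : Finset.Ico b c = insert b (Finset.Ioo b c) := (Finset.Ioo_insert_left h2).symm
  have hdisj : Disjoint (Finset.Ioo a b) (Finset.Ico b c) := by
    rw [Finset.disjoint_left]
    intro x hx hx'
    simp only [Finset.mem_Ioo, Finset.mem_Ico] at hx hx'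
    omega
  rw [← hu, Finset.filter_union, Finset.card_union_of_disjoint
    (Finset.disjoint_filter_filter hdisj), hico, Finset.filter_insert]
  by_cases hp : p b
  · rw [if_pos hp, if_pos hp, Finset.card_insert_of_notMem (by simp)]
    ring
  · rw [if_neg hp, if_neg hp]
    omega

lemma dist_split (l : DomWeight n) {a b c : ℕ} (h1 : a < b) (h2 : b < c) :
    l.dist a c = l.dist a b
      + ((if l.EmptyAt b then 1 else 0) - (if l.HasX b then 1 else 0)) + l.dist b c := by
  unfold dist
  rw [filter_Ioo_split (fun v => l.EmptyAt v) h1 h2, filter_Ioo_split (fun v => l.HasX v) h1 h2]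
  push_cast
  by_cases he : l.EmptyAt b <;> by_cases hx : l.HasX b <;> simp [he, hx] <;> ring

lemma not_hasX_of_emptyAt (l : DomWeight n) {v : ℕ} (h : l.EmptyAt v) : ¬ l.HasX v := by
  intro hx
  exact h.2.1 hx.2.1

/-- Uniform constant such that `len i t = dist x_i t - cst i`. -/
def cst (l : DomWeight n) (i : ℕ) : ℤ :=
  if 0 < l.xVertex i then 0 else 2 * ((l.numX0 : ℤ) - (i : ℤ)) + (l.barz : ℤ)

lemma len_eq_dist_sub (l : DomWeight n) (i t : ℕ) :
    l.len i t = l.dist (l.xVertex i) t - l.cst i := by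
  unfold len cst
  by_cases h : 0 < l.xVertex i
  · simp [h]
  · have hx : l.xVertex i = 0 := by omega
    rw [if_neg h, if_neg h, hx]
    ring

lemma cst_nonneg (l : DomWeight n) {i : ℕ} (h2 : i ≤ l.atyp) : 0 ≤ l.cst i := by
  unfold cst
  by_cases h : 0 < l.xVertex i
  · simp [h]
  · rw [if_neg h]
    have hx : l.xVertex i = 0 := by omega
    have := (l.xVertex_eq_zero_iff h2).mp hx
    have hb : (0:ℤ) ≤ (l.barz : ℤ) := Int.natCast_nonneg _
    have : (i : ℤ) ≤ (l.numX0 : ℤ) := by exact_mod_cast this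
    linarith

lemma dist_nonpos_of_no_empty (l : DomWeight n) {a v : ℕ}
    (h : (Finset.Ioo a v).filter l.EmptyAt = ∅) : l.dist a v ≤ 0 := by
  unfold dist
  rw [h]
  simp

/-- Key lemma: if every empty vertex strictly between `x_i` and `v` has
negative length, then `len i v ≤ 0`. -/
lemma len_le_zero_of_neg_before (l : DomWeight n) {i v : ℕ} (h2 : i ≤ l.atyp)
    (hv : l.xVertex i < v)
    (hneg : ∀ s, l.xVertex i < s → s < v → l.EmptyAt s → l.len i s < 0) :
    l.len i v ≤ 0 := by
  set a := l.xVertex i with ha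
  have hc := l.cst_nonneg h2
  rw [len_eq_dist_sub]
  set E := (Finset.Ioo a v).filter l.EmptyAt with hE
  by_cases hne : E.Nonempty
  · obtain ⟨s, hsmem, hmax⟩ : ∃ s ∈ E, ∀ u ∈ E, u ≤ s :=
      ⟨E.max' hne, E.max'_mem hne, fun u hu => E.le_max' u hu⟩
    rw [hE, Finset.mem_filter, Finset.mem_Ioo] at hsmem
    obtain ⟨⟨has, hsv⟩, hemp⟩ := hsmem
    have hno : (Finset.Ioo s v).filter l.EmptyAt = ∅ := by
      rw [Finset.eq_empty_iff_forall_notMem]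
      intro u hu
      rw [Finset.mem_filter, Finset.mem_Ioo] at hu
      have humem : u ∈ E := by
        rw [hE, Finset.mem_filter, Finset.mem_Ioo]
        exact ⟨⟨lt_trans has hu.1.1, hu.1.2⟩, hu.2⟩
      exact absurd (hmax u humem) (by omega)
    have hsplit := l.dist_split has hsv
    rw [if_pos hemp, if_neg (l.not_hasX_of_emptyAt hemp)] at hsplit
    have hd2 := l.dist_nonpos_of_no_empty hno
    have hlen_s : l.len i s < 0 := hneg s has hsv hemp
    rw [len_eq_dist_sub] at hlen_s
    linarith
  · have : (Finset.Ioo a v).filter l.EmptyAt = ∅ := Finset.not_nonempty_iff_eq_empty.mp hne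
    have := l.dist_nonpos_of_no_empty this
    linarith

-- ### batch 4: destination existence, uniqueness, distinctness

lemma dest_unique (l : DomWeight n) {i t t' : ℕ} (h : l.IsRightMoveDest i t)
    (h' : l.IsRightMoveDest i t') : t = t' := by
  rcases lt_trichotomy t t' with hlt | heq | hgt
  · exact absurd h.2.2.1 (by have := h'.2.2.2 t h.2.1 hlt h.1; omega)
  · exact heq
  · exact absurd h'.2.2.1 (by have := h.2.2.2 t' h'.2.1 hgt h'.1; omega)

lemma emptyAt_of_big (l : DomWeight n) {v : ℕ}
    (h : (Finset.univ.sup fun idx => (l.coeff idx).natAbs) < v) : l.EmptyAt v := by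
  refine ⟨by omega, ?_, ?_⟩ <;> rintro ⟨idx, hidx⟩ <;>
    [skip; skip] <;>
    · have h2 : (l.coeff idx).natAbs ≤ Finset.univ.sup fun idx => (l.coeff idx).natAbs :=
        Finset.le_sup (f := fun idx => (l.coeff idx).natAbs) (Finset.mem_univ idx)
      rw [hidx] at h2
      simp at h2
      omega

lemma dist_succ (l : DomWeight n) {a t : ℕ} (h : a < t) (he : l.EmptyAt t) :
    l.dist a (t + 1) = l.dist a t + 1 := by
  have hins : Finset.Ioo a (t + 1) = insert t (Finset.Ioo a t) := by
    ext x
    simp only [Finset.mem_Ioo, Finset.mem_insert]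
    omega
  unfold dist
  rw [hins, Finset.filter_insert, Finset.filter_insert, if_pos he,
    if_neg (l.not_hasX_of_emptyAt he), Finset.card_insert_of_notMem (by simp)]
  push_cast
  ring

lemma exists_empty_len_nonneg (l : DomWeight n) (i : ℕ) :
    ∃ t, l.xVertex i < t ∧ l.EmptyAt t ∧ 0 ≤ l.len i t := by
  set B := max ((Finset.univ.sup fun idx => (l.coeff idx).natAbs) + 1) (l.xVertex i + 1) with hB
  have hBemp : ∀ v, B ≤ v → l.EmptyAt v := fun v hv => l.emptyAt_of_big (by omega)
  have hBx : l.xVertex i < B := by omega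
  have key : ∀ k : ℕ, l.len i (B + k) = l.len i B + k := by
    intro k
    induction k with
    | zero => simp
    | succ k ih =>
      have hstep : l.len i (B + k + 1) = l.len i (B + k) + 1 := by
        rw [len_eq_dist_sub, len_eq_dist_sub, l.dist_succ (by omega) (hBemp _ (by omega))]
        ring
      have : B + (k + 1) = (B + k) + 1 := by omega
      rw [this, hstep, ih]
      push_cast
      ring
  refine ⟨B + (-(l.len i B)).toNat, by omega, hBemp _ (by omega), ?_⟩
  rw [key]
  have := Int.self_le_toNat (-(l.len i B))
  omega

lemma exists_dest (l : DomWeight n) {i : ℕ} (h2 : i ≤ l.atyp) :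
    ∃ t, l.IsRightMoveDest i t := by
  have hex := l.exists_empty_len_nonneg i
  classical
  have ht : l.xVertex i < Nat.find hex ∧ l.EmptyAt (Nat.find hex)
      ∧ 0 ≤ l.len i (Nat.find hex) := Nat.find_spec hex
  have hmin : ∀ s, s < Nat.find hex → ¬(l.xVertex i < s ∧ l.EmptyAt s ∧ 0 ≤ l.len i s) :=
    fun s hs => Nat.find_min hex hs
  set t := Nat.find hex with htdef
  have hneg : ∀ s, l.xVertex i < s → s < t → l.EmptyAt s → l.len i s < 0 := by
    intro s h1 h2' h3
    have := hmin s h2'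
    push_neg at this
    have := this h1 h3
    omega
  refine ⟨t, ht.2.1, ht.1, ?_, hneg⟩
  have hle := l.len_le_zero_of_neg_before h2 ht.1 hneg
  have := ht.2.2
  omega

lemma dest_distinct (l : DomWeight n) {i j t : ℕ} (hi1 : 1 ≤ i) (hi2 : i ≤ l.atyp)
    (hj1 : 1 ≤ j) (hj2 : j ≤ l.atyp) (hij : i < j)
    (hdi : l.IsRightMoveDest i t) (hdj : l.IsRightMoveDest j t) : False := by
  by_cases hzj : l.xVertex j = 0
  · -- both at vertex 0
    have hjn : j ≤ l.numX0 := (l.xVertex_eq_zero_iff hj2).mp hzj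
    have hin : i ≤ l.numX0 := by omega
    have hzi : l.xVertex i = 0 := l.xVertex_eq_zero hin
    have e1 := hdi.2.2.1
    have e2 := hdj.2.2.1
    rw [len_eq_dist_sub] at e1 e2
    unfold cst at e1 e2
    rw [hzi, if_neg (lt_irrefl 0)] at e1
    rw [hzj, if_neg (lt_irrefl 0)] at e2
    have : (i : ℤ) = (j : ℤ) := by linarith
    omega
  · -- x_j positive
    have hjn : l.numX0 < j := by
      by_contra hc
      exact hzj (l.xVertex_eq_zero (by omega))
    have hxj_pos : 0 < l.xVertex j := l.xVertex_pos hjn hj2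
    have hxij : l.xVertex i < l.xVertex j := by
      by_cases hin : i ≤ l.numX0
      · rw [l.xVertex_eq_zero hin]; exact hxj_pos
      · exact l.xVertex_lt (by omega) hij hj2
    have hXj : l.HasX (l.xVertex j) := l.hasX_of_mem_posXs (l.xVertex_mem_posXs hjn hj2)
    have hnotE : ¬ l.EmptyAt (l.xVertex j) := fun he => he.2.1 hXj.2.1
    -- len j t = dist x_j t since cst j = 0
    have hcstj : l.cst j = 0 := by unfold cst; rw [if_pos hxj_pos]
    have hdxjt : l.dist (l.xVertex j) t = 0 := by
      have := hdj.2.2.1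
      rw [len_eq_dist_sub, hcstj] at this
      linarith
    -- split dist x_i t at x_j
    have hsplit := l.dist_split hxij hdj.2.1
    rw [if_neg hnotE, if_pos hXj] at hsplit
    -- len i t = 0
    have e1 := hdi.2.2.1
    rw [len_eq_dist_sub] at e1
    -- so len i x_j = 1
    have hlenixj : l.len i (l.xVertex j) = 1 := by
      rw [len_eq_dist_sub]
      linarith
    -- but key lemma gives ≤ 0
    have hneg : ∀ s, l.xVertex i < s → s < l.xVertex j → l.EmptyAt s → l.len i s < 0 :=
      fun s h1 h2' h3 => hdi.2.2.2 s h1 (lt_trans h2' hdj.2.1) h3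
    have := l.len_le_zero_of_neg_before hi2 hxij hneg
    omega

-- ### batch 5: entries determine the weight; construction from a multiset

lemma count_map_univ (f : Fin n → ℤ) (v : ℤ) :
    (Multiset.map f Finset.univ.val).count v = (Finset.univ.filter fun i => f i = v).card := by
  rw [Multiset.count_map, Finset.card_filter]
  simp [eq_comm]
  rfl

lemma entries_eq_ofFn (l : DomWeight n) : l.entries = ↑(List.ofFn l.coeff) := by
  rw [entries, Fin.univ_val_map]

lemma sorted_ofFn (l : DomWeight n) : (List.ofFn l.coeff).Pairwise (· ≥ ·) := by
  rw [List.pairwise_ofFn]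
  intro i j hij
  exact l.antitone' i j hij.le

lemma eq_of_entries_eq {m m' : DomWeight n} (h : m.entries = m'.entries) : m = m' := by
  have hperm : List.Perm (List.ofFn m.coeff) (List.ofFn m'.coeff) := by
    rw [← Multiset.coe_eq_coe, ← entries_eq_ofFn, ← entries_eq_ofFn]
    exact h
  have heq := List.Perm.eq_of_pairwise' m.sorted_ofFn m'.sorted_ofFn hperm
  rw [List.ofFn_inj] at heq
  cases m; cases m'
  simpa using heq

lemma exists_of_multiset (M : Multiset ℤ) (hcard : Multiset.card M = n)
    (hreg : ∀ v : ℤ, v ≠ 0 → M.count v ≤ 1) :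
    ∃ m : DomWeight n, m.entries = M := by
  set L := M.sort (· ≥ ·) with hL
  have hLs : L.Pairwise (· ≥ ·) := M.pairwise_sort _
  have hLm : (↑L : Multiset ℤ) = M := M.sort_eq _
  have hlen : L.length = n := by
    have : Multiset.card (↑L : Multiset ℤ) = n := by rw [hLm, hcard]
    simpa using this
  set coeff : Fin n → ℤ := fun i => L.getD i 0 with hcoeff
  have hget : ∀ i : Fin n, coeff i = L.get ⟨i, by omega⟩ := by
    intro i
    rw [hcoeff]
    simp only
    rw [List.getD_eq_getElem L 0 (by omega)]
    simp
  have hofn : List.ofFn coeff = L := by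
    apply List.ext_getElem
    · simp [hlen]
    · intro i h1 h2
      simp only [List.getElem_ofFn]
      rw [hget]
      simp
  have hM : Multiset.map coeff Finset.univ.val = M := by
    rw [Fin.univ_val_map, hofn, hLm]
  have hanti : ∀ i j : Fin n, i ≤ j → coeff j ≤ coeff i := by
    intro i j hij
    rw [hget, hget]
    exact hLs.rel_get_of_le (by simpa using hij)
  have hregular : ∀ i j : Fin n, i ≠ j → coeff i = coeff j → coeff i = 0 := by
    intro i j hij heq
    by_contra hv
    have h2 : 2 ≤ M.count (coeff i) := by
      rw [← hM, count_map_univ]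
      have : ({i, j} : Finset (Fin n)) ⊆ Finset.univ.filter fun k => coeff k = coeff i := by
        intro k hk
        rcases Finset.mem_insert.mp hk with rfl | hk
        · simp
        · rw [Finset.mem_singleton] at hk
          subst hk
          simp [heq.symm]
      calc 2 = ({i, j} : Finset (Fin n)).card := by rw [Finset.card_insert_of_notMem (by simpa using hij), Finset.card_singleton]
        _ ≤ _ := Finset.card_le_card this
    have := hreg (coeff i) hv
    omega
  exact ⟨⟨coeff, hanti, hregular⟩, by rw [entries]; exact hM⟩


lemma xVertex_eq_zero_of_eq (l : DomWeight n) {i j : ℕ} (hi2 : i ≤ l.atyp)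
    (hj2 : j ≤ l.atyp) (hij : i ≠ j) (hx : l.xVertex i = l.xVertex j) : l.xVertex i = 0 := by
  by_contra h
  have hi : l.numX0 < i := by
    by_contra hc; exact h (l.xVertex_eq_zero (by omega))
  have hj : l.numX0 < j := by
    by_contra hc; rw [hx] at h; exact h (l.xVertex_eq_zero (by omega))
  rcases lt_or_gt_of_ne hij with hlt | hgt
  · exact absurd hx (by have := l.xVertex_lt hi hlt hj2; omega)
  · exact absurd hx (by have := l.xVertex_lt hj hgt hi2; omega)

lemma count_pairsum (S : Finset ℕ) (f : ℕ → ℕ) (v : ℤ) :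
    Multiset.count v (∑ i ∈ S, ({(f i : ℤ), -(f i : ℤ)} : Multiset ℤ))
      = ∑ i ∈ S, ((if v = (f i : ℤ) then 1 else 0) + (if v = -(f i : ℤ) then 1 else 0)) := by
  rw [Multiset.count_sum']
  refine Finset.sum_congr rfl fun i _ => ?_
  rw [Multiset.insert_eq_cons, Multiset.count_cons, Multiset.count_singleton]
  split_ifs <;> omega

lemma pairsum_count_le_one (S : Finset ℕ) (f : ℕ → ℕ) {v : ℤ} (hv : v ≠ 0)
    (huniq : ∀ i ∈ S, ∀ j ∈ S, f i = v.natAbs → f j = v.natAbs → i = j) :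
    Multiset.count v (∑ i ∈ S, ({(f i : ℤ), -(f i : ℤ)} : Multiset ℤ)) ≤ 1 := by
  rw [count_pairsum]
  have hterm : ∀ i ∈ S,
      ((if v = (f i : ℤ) then 1 else 0) + (if v = -(f i : ℤ) then 1 else 0))
        ≤ if f i = v.natAbs then 1 else 0 := by
    intro i _
    split_ifs <;> omega
  calc ∑ i ∈ S, ((if v = (f i : ℤ) then 1 else 0) + (if v = -(f i : ℤ) then 1 else 0))
      ≤ ∑ i ∈ S, (if f i = v.natAbs then 1 else 0) := Finset.sum_le_sum hterm
    _ = (S.filter fun i => f i = v.natAbs).card := by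
        rw [← Finset.sum_filter]; simp
    _ ≤ 1 := Finset.card_le_one.mpr fun i hi j hj => by
        rw [Finset.mem_filter] at hi hj
        exact huniq i hi.1 j hj.1 hi.2 hj.2

lemma card_pairsum (S : Finset ℕ) (f : ℕ → ℕ) :
    Multiset.card (∑ i ∈ S, ({(f i : ℤ), -(f i : ℤ)} : Multiset ℤ)) = 2 * S.card := by
  rw [Multiset.card_sum, Finset.sum_congr rfl (fun i _ => Multiset.card_pair _ _),
    Finset.sum_const, smul_eq_mul, mul_comm]

lemma pairsum_count_pos (S : Finset ℕ) (f : ℕ → ℕ) {v : ℤ}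
    (h : 0 < Multiset.count v (∑ i ∈ S, ({(f i : ℤ), -(f i : ℤ)} : Multiset ℤ))) :
    ∃ i ∈ S, v = (f i : ℤ) ∨ v = -(f i : ℤ) := by
  rw [count_pairsum] at h
  by_contra hc
  push_neg at hc
  rw [Finset.sum_eq_zero (fun i hi => by
    have := hc i hi
    simp [this.1, this.2])] at h
  omega

end DomWeight

/-- For `λ ∈ ℤⁿ₊₊` and `θ ∈ {0,1}^{#λ}`: the destinations of the right moves
`R_i(λ)`, `θ_i = 1` (computed independently in `D_λ`), are pairwise distinct;
consequently `R_θ(λ)` is a well-defined integral dominant weight, and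
`z(R_θ(λ)) = z(λ) − 2·#{i : θ_i = 1, x_i = 0}`. -/
theorem stmt14 (n : ℕ) (l : DomWeight n) (θ : ℕ → Bool) :
    (∀ dest : ℕ → ℕ, (∀ i ∈ selected l.atyp θ, l.IsRightMoveDest i (dest i)) →
      ∀ i ∈ selected l.atyp θ, ∀ j ∈ selected l.atyp θ, i ≠ j → dest i ≠ dest j) ∧
    (∃! m : DomWeight n, l.IsRightPathRes θ m) ∧
    (∀ m : DomWeight n, l.IsRightPathRes θ m →
      m.zNum = l.zNum - 2 * ((selected l.atyp θ).filter fun i => l.xVertex i = 0).card) := by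
  classical
  set S := selected l.atyp θ with hS
  have hmemS : ∀ i ∈ S, 1 ≤ i ∧ i ≤ l.atyp := by
    intro i hi
    rw [hS, selected, Finset.mem_filter, Finset.mem_Icc] at hi
    exact ⟨hi.1.1, hi.1.2⟩
  -- Part 1: distinct destinations
  have hdistinct : ∀ dest : ℕ → ℕ, (∀ i ∈ S, l.IsRightMoveDest i (dest i)) →
      ∀ i ∈ S, ∀ j ∈ S, i ≠ j → dest i ≠ dest j := by
    intro dest hdest i hi j hj hij heq
    obtain ⟨hi1, hi2⟩ := hmemS i hi
    obtain ⟨hj1, hj2⟩ := hmemS j hj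
    have hdj' := hdest j hj
    rw [← heq] at hdj'
    rcases lt_or_gt_of_ne hij with hlt | hgt
    · exact l.dest_distinct hi1 hi2 hj1 hj2 hlt (hdest i hi) hdj'
    · exact l.dest_distinct hj1 hj2 hi1 hi2 hgt hdj' (hdest i hi)
  -- canonical destinations
  have hSel : ∀ i ∈ S, ∃ t, l.IsRightMoveDest i t := fun i hi => l.exists_dest (hmemS i hi).2
  choose! dest0 hdest0 using hSel
  set Rem : Multiset ℤ := ∑ i ∈ S, ({(l.xVertex i : ℤ), -(l.xVertex i : ℤ)} : Multiset ℤ)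
    with hRem
  set S0 := S.filter (fun i => l.xVertex i = 0) with hS0
  have hk0 : S0.card ≤ l.numX0 := by
    have hsub : S0 ⊆ Finset.Icc 1 l.numX0 := by
      intro i hi
      rw [hS0, Finset.mem_filter] at hi
      obtain ⟨h1, h2⟩ := hmemS i hi.1
      rw [Finset.mem_Icc]
      exact ⟨h1, (l.xVertex_eq_zero_iff h2).mp hi.2⟩
    calc S0.card ≤ (Finset.Icc 1 l.numX0).card := Finset.card_le_card hsub
      _ = l.numX0 := by rw [Nat.card_Icc]; omega
  have cr0 : Rem.count 0 = 2 * S0.card := by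
    rw [hRem, DomWeight.count_pairsum]
    have hcg : ∀ i ∈ S, ((if (0:ℤ) = (l.xVertex i : ℤ) then 1 else 0)
        + (if (0:ℤ) = -(l.xVertex i : ℤ) then 1 else 0))
        = if l.xVertex i = 0 then 2 else 0 := by
      intro i _; split_ifs <;> omega
    rw [Finset.sum_congr rfl hcg, ← Finset.sum_filter, ← hS0]
    simp [mul_comm]
  have crle : ∀ v : ℤ, v ≠ 0 → Rem.count v ≤ 1 := by
    intro v hv
    rw [hRem]
    apply DomWeight.pairsum_count_le_one _ _ hv
    intro i hi j hj hfi hfj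
    by_contra hij
    have := l.xVertex_eq_zero_of_eq (hmemS i hi).2 (hmemS j hj).2 hij (hfi.trans hfj.symm)
    rw [hfi] at this
    omega
  have crentry : ∀ v : ℤ, v ≠ 0 → 0 < Rem.count v → 0 < l.entries.count v := by
    intro v hv hpos
    rw [hRem] at hpos
    obtain ⟨i, hi, hcase⟩ := DomWeight.pairsum_count_pos _ _ hpos
    have hxne : l.xVertex i ≠ 0 := by
      intro h0
      rw [h0] at hcase
      push_cast at hcase
      omega
    have hnum : l.numX0 < i := by
      by_contra hc
      exact hxne (l.xVertex_eq_zero (by omega))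
    have hX := l.hasX_of_mem_posXs (l.xVertex_mem_posXs hnum (hmemS i hi).2)
    rw [← l.isEntry_iff_count]
    rcases hcase with h | h
    · rw [h]; exact hX.2.1
    · rw [h]; exact hX.2.2
  have hle : Rem ≤ l.entries := by
    rw [Multiset.le_iff_count]
    intro v
    by_cases hv : v = 0
    · rw [hv, cr0, l.count_zero_entries]
      have hnx : l.numX0 = l.zNum / 2 := rfl
      omega
    · have h1 := crle v hv
      by_cases hp : 0 < Rem.count v
      · have := crentry v hv hp; omega
      · omega
  -- general facts about Add-multisets from valid destination functions
  have ca0' : ∀ dest' : ℕ → ℕ, (∀ i ∈ S, l.IsRightMoveDest i (dest' i)) →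
      Multiset.count 0 (∑ i ∈ S, ({(dest' i : ℤ), -(dest' i : ℤ)} : Multiset ℤ)) = 0 := by
    intro dest' hdest'
    rw [DomWeight.count_pairsum]
    apply Finset.sum_eq_zero
    intro i hi
    have hpos : 0 < dest' i := (hdest' i hi).1.1
    split_ifs <;> omega
  set Add : Multiset ℤ := ∑ i ∈ S, ({(dest0 i : ℤ), -(dest0 i : ℤ)} : Multiset ℤ) with hAdd
  have cale : ∀ v : ℤ, v ≠ 0 → Add.count v ≤ 1 := by
    intro v hv
    rw [hAdd]
    apply DomWeight.pairsum_count_le_one _ _ hv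
    intro i hi j hj hfi hfj
    by_contra hij
    exact hdistinct dest0 hdest0 i hi j hj hij (hfi.trans hfj.symm)
  have caentry : ∀ v : ℤ, 0 < Add.count v → l.entries.count v = 0 := by
    intro v hpos
    rw [hAdd] at hpos
    obtain ⟨i, hi, hcase⟩ := DomWeight.pairsum_count_pos _ _ hpos
    have hemp := (hdest0 i hi).1
    have hne : ¬ l.IsEntry v := by
      rcases hcase with h | h
      · rw [h]; exact hemp.2.1
      · rw [h]; exact hemp.2.2
    have h2 : ¬ (0 < l.entries.count v) := fun hc => hne ((l.isEntry_iff_count v).mpr hc)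
    omega
  -- the new entry multiset
  set M : Multiset ℤ := l.entries - Rem + Add with hMdef
  have hMeq : M + Rem = l.entries + Add := by
    rw [hMdef, add_right_comm, tsub_add_cancel_of_le hle]
  have hcount : ∀ v : ℤ, M.count v + Rem.count v = l.entries.count v + Add.count v := by
    intro v
    rw [← Multiset.count_add, ← Multiset.count_add, hMeq]
  have hcard : Multiset.card M = n := by
    have h2 : Multiset.card Rem = 2 * S.card := by rw [hRem, DomWeight.card_pairsum]
    have h3 : Multiset.card Add = 2 * S.card := by rw [hAdd, DomWeight.card_pairsum]
    have h4 : Multiset.card Rem ≤ Multiset.card l.entries := Multiset.card_le_card hle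
    have h6 := l.card_entries
    rw [hMdef, Multiset.card_add, Multiset.card_sub hle]
    omega
  have hMle1 : ∀ v : ℤ, v ≠ 0 → M.count v ≤ 1 := by
    intro v hv
    have h := hcount v
    have h1 := l.count_le_one hv
    have h2 := cale v hv
    by_cases hp : 0 < Add.count v
    · have := caentry v hp; omega
    · omega
  obtain ⟨m0, hm0⟩ := DomWeight.exists_of_multiset M hcard hMle1
  have hm0res : l.IsRightPathRes θ m0 := by
    refine ⟨dest0, hdest0, ?_⟩
    rw [hm0, ← hRem, ← hAdd]
    exact hMeq
  refine ⟨hdistinct, ⟨m0, hm0res, ?_⟩, ?_⟩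
  · -- uniqueness
    rintro m' ⟨dest', hdest', heq'⟩
    have hdd : ∀ i ∈ S, dest' i = dest0 i := fun i hi =>
      l.dest_unique (hdest' i hi) (hdest0 i hi)
    have hsum : (∑ i ∈ S, ({(dest' i : ℤ), -(dest' i : ℤ)} : Multiset ℤ)) = Add := by
      rw [hAdd]
      exact Finset.sum_congr rfl (fun i hi => by rw [hdd i hi])
    rw [hsum, ← hRem] at heq'
    have hEE : m'.entries + Rem = m0.entries + Rem := by
      rw [heq', hm0]
      exact hMeq.symm
    exact DomWeight.eq_of_entries_eq (add_right_cancel hEE)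
  · -- the zNum formula
    rintro m ⟨dest', hdest', heq'⟩
    rw [← hRem] at heq'
    have h0 := congrArg (Multiset.count 0) heq'
    rw [Multiset.count_add, Multiset.count_add, cr0, ca0' dest' hdest',
      l.count_zero_entries, m.count_zero_entries] at h0
    omega
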